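/- Let {ξ_n}_{n≥1} be a strictly increasing sequence with 0 < ξ_n < 1 for all n, and let ν be a Borel probability measure on (0,1] such that ∫ s^n dν(s) = ξ₁²ξ₂²⋯ξ_n² for all n ≥ 1 and such that s ↦ 1/s² is ν-integrable. Set ξ_e := (∫ (1/s) dν(s))^{−1/2}, and let a, b > 0 satisfy a ≤ ξ_e^{−1} (∫ (1/s²) dν(s))^{−1/2}, b ≤ ξ_e², and 2a² ≤ b² + ξ_e². Define weights α(0,0) := a, α(1,0) := ξ_e, α(i,0) := ξ_{i−1} for i ≥ 2, α(0,1) := b, α(0,j) := ξ_{j−1} b / ξ_e for j ≥ 2, α(i,j) := ξ_i for i ≥ 1, j ≥ 1, and β(i,j) := α(j,i) for all (i,j) ∈ ℤ₊². Then the six-point-test matrix M(k) is positive semidefinite for every k ∈ ℤ₊². -/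

import Mathlib

open MeasureTheory

/-- A 2×2 real symmetric matrix with nonnegative diagonal and nonnegative
determinant is positive semidefinite. -/
lemma psd2 (p q r : ℝ) (hp : 0 ≤ p) (hr : 0 ≤ r) (hd : q ^ 2 ≤ p * r) :
    (!![p, q; q, r] : Matrix (Fin 2) (Fin 2) ℝ).PosSemidef := by
  rw [Matrix.posSemidef_iff_dotProduct_mulVec]
  constructor
  · ext i j
    fin_cases i <;> fin_cases j <;>
      simp [Matrix.conjTranspose, Matrix.transpose, Matrix.vecHead, Matrix.vecTail]
  · intro x
    simp [Matrix.mulVec, dotProduct, Fin.sum_univ_two]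
    rcases eq_or_lt_of_le hp with h | h
    · have hq : q = 0 := by nlinarith [sq_nonneg q]
      subst hq
      rcases h with h
      subst h
      nlinarith [mul_nonneg hr (sq_nonneg (x 1))]
    · have key : 0 ≤ (p * x 0 + q * x 1) ^ 2 + (p * r - q ^ 2) * (x 1) ^ 2 := by
        nlinarith [sq_nonneg (p * x 0 + q * x 1), sq_nonneg (x 1)]
      nlinarith [key]

lemma auxR (x1 x2 ξe b : ℝ) (h1 : 0 < x1) (h12 : x1 ≤ x2) (h2 : x2 ≤ 1)
    (hξe : 0 < ξe) (hξe1 : ξe ≤ x1) (hb : 0 < b) (hbe : b ≤ ξe ^ 2) :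
    0 ≤ x1 ^ 2 - (x2 * b / ξe) ^ 2 := by
  have key2 : x2 * b ≤ x1 * ξe := by nlinarith
  have hx2b : 0 ≤ x2 * b := by nlinarith
  rw [sub_nonneg, div_pow, div_le_iff₀ (by positivity)]
  nlinarith [key2, mul_pos h1 hξe, hx2b]

lemma auxQ (x1 x2 x3 ξe b : ℝ) (h1 : 0 < x1) (h12 : x1 ≤ x2) (h23 : x2 ≤ x3) (h3 : x3 ≤ 1)
    (hξe : 0 < ξe) (hξe1 : ξe ≤ x1) (hb : 0 < b) (hbe : b ≤ ξe ^ 2) :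
    (x3 * (x3 * b / ξe) - x2 * (x2 * b / ξe)) ^ 2
      ≤ (x3 ^ 2 - x2 ^ 2) * (x1 ^ 2 - (x2 * b / ξe) ^ 2) := by
  have key3 : x3 * b ≤ x1 * ξe := by nlinarith
  rw [← sub_nonneg]
  have heq : (x3 ^ 2 - x2 ^ 2) * (x1 ^ 2 - (x2 * b / ξe) ^ 2)
      - (x3 * (x3 * b / ξe) - x2 * (x2 * b / ξe)) ^ 2
      = ((x3 ^ 2 - x2 ^ 2) * (x1 ^ 2 * ξe ^ 2 - x3 ^ 2 * b ^ 2)) / ξe ^ 2 := by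
    field_simp
    ring
  rw [heq]
  apply div_nonneg _ (sq_nonneg ξe)
  apply mul_nonneg (by nlinarith)
  have hx3b : 0 ≤ x3 * b := by nlinarith
  nlinarith [key3, mul_pos h1 hξe, hx3b]

lemma auxQ' (x1 x2 x3 ξe b : ℝ) (h1 : 0 < x1) (h12 : x1 ≤ x2) (h23 : x2 ≤ x3) (h3 : x3 ≤ 1)
    (hξe : 0 < ξe) (hξe1 : ξe ≤ x1) (hb : 0 < b) (hbe : b ≤ ξe ^ 2) :
    (x3 * b / ξe * x3 - x2 * b / ξe * x2) ^ 2
      ≤ (x1 ^ 2 - (x2 * b / ξe) ^ 2) * (x3 ^ 2 - x2 ^ 2) := by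
  have h := auxQ x1 x2 x3 ξe b h1 h12 h23 h3 hξe hξe1 hb hbe
  calc (x3 * b / ξe * x3 - x2 * b / ξe * x2) ^ 2
      = (x3 * (x3 * b / ξe) - x2 * (x2 * b / ξe)) ^ 2 := by ring
    _ ≤ (x3 ^ 2 - x2 ^ 2) * (x1 ^ 2 - (x2 * b / ξe) ^ 2) := h
    _ = (x1 ^ 2 - (x2 * b / ξe) ^ 2) * (x3 ^ 2 - x2 ^ 2) := by ring

lemma auxS (x1 ξe b : ℝ) (h1 : 0 < x1) (h11 : x1 ≤ 1)
    (hξe : 0 < ξe) (hξe1 : ξe ≤ x1) (hb : 0 < b) (hbe : b ≤ ξe ^ 2) :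
    (x1 * (x1 * b / ξe) - ξe * b) ^ 2 ≤ (x1 ^ 2 - ξe ^ 2) * (x1 ^ 2 - b ^ 2) := by
  have hee : ξe ^ 2 ≤ 1 := by nlinarith
  have hb2 : b ^ 2 ≤ ξe ^ 2 := by
    nlinarith [mul_le_mul hbe hbe hb.le (sq_nonneg ξe),
      mul_le_mul_of_nonneg_left hee (sq_nonneg ξe)]
  rw [← sub_nonneg]
  have heq : (x1 ^ 2 - ξe ^ 2) * (x1 ^ 2 - b ^ 2) - (x1 * (x1 * b / ξe) - ξe * b) ^ 2
      = ((x1 ^ 2 - ξe ^ 2) * (x1 ^ 2 * (ξe ^ 2 - b ^ 2))) / ξe ^ 2 := by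
    field_simp
    ring
  rw [heq]
  apply div_nonneg _ (sq_nonneg ξe)
  apply mul_nonneg (by nlinarith)
  nlinarith [sq_nonneg x1]


/-- Analytic preliminaries: positivity and size bounds for the extremal value `ξe`. -/
lemma prelim (ξ : ℕ → ℝ) (ν : Measure ℝ) (hνprob : IsProbabilityMeasure ν)
    (hνsupp : ν (Set.Ioc (0 : ℝ) 1)ᶜ = 0)
    (hξpos : ∀ n : ℕ, 1 ≤ n → 0 < ξ n) (hξlt1 : ∀ n : ℕ, 1 ≤ n → ξ n < 1)
    (hmom : ∀ n : ℕ, 1 ≤ n → ∫ s, s ^ n ∂ν = ∏ i ∈ Finset.Icc 1 n, ξ i ^ 2)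
    (hint : Integrable (fun s => 1 / s ^ 2) ν)
    (ξe : ℝ) (hξe : ξe = Real.sqrt (∫ s, 1 / s ∂ν)⁻¹)
    (a b : ℝ) (ha₀ : 0 < a) (hb₀ : 0 < b)
    (hb : b ≤ ξe ^ 2) (hab : 2 * a ^ 2 ≤ b ^ 2 + ξe ^ 2) :
    0 < ξe ∧ ξe ≤ ξ 1 ∧ ξe < 1 ∧ b ^ 2 ≤ ξe ^ 2 ∧ a ^ 2 ≤ ξe ^ 2 := by
  have hξ1 : 0 < ξ 1 := hξpos 1 le_rfl
  have hξ1lt : ξ 1 < 1 := hξlt1 1 le_rfl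
  have hmom1 : ∫ s, s ∂ν = ξ 1 ^ 2 := by
    have h := hmom 1 le_rfl
    simpa using h
  set t : ℝ := ξ 1 ^ 2 with ht
  have ht0 : 0 < t := by positivity
  have hae : ∀ᵐ s ∂ν, s ∈ Set.Ioc (0:ℝ) 1 := by
    rw [ae_iff]; simpa [Set.compl_def] using hνsupp
  have hint1 : Integrable (fun s => 1 / s) ν := by
    refine hint.mono (measurable_id.inv.aestronglyMeasurable.congr ?_) ?_
    · exact Filter.Eventually.of_forall fun s => (one_div s).symm
    · filter_upwards [hae] with s hs
      have hs0 : 0 < s := hs.1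
      rw [Real.norm_eq_abs, Real.norm_eq_abs, abs_of_pos (by positivity : (0:ℝ) < 1/s),
        abs_of_pos (by positivity : (0:ℝ) < 1/s^2)]
      rw [div_le_div_iff₀ (by positivity) (by positivity)]
      nlinarith [hs.2]
  have hints : Integrable (fun s : ℝ => s) ν := by
    refine (integrable_const (1:ℝ)).mono measurable_id.aestronglyMeasurable ?_
    filter_upwards [hae] with s hs
    rw [Real.norm_eq_abs, Real.norm_eq_abs, abs_of_pos hs.1, abs_one]
    exact hs.2
  have hmono : ∫ s, (2/t - s/t^2) ∂ν ≤ ∫ s, 1/s ∂ν := by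
    refine integral_mono_ae ((integrable_const (2/t)).sub (hints.div_const (t^2))) hint1 ?_
    filter_upwards [hae] with s hs
    have hs0 : 0 < s := hs.1
    have h1 : 1/s - (2/t - s/t^2) = (s-t)^2/(s*t^2) := by field_simp; ring
    nlinarith [div_nonneg (sq_nonneg (s-t)) (le_of_lt (mul_pos hs0 (pow_pos ht0 2)))]
  have hcomp : ∫ s, (2/t - s/t^2) ∂ν = 1/t := by
    rw [integral_sub (integrable_const _) (hints.div_const _), integral_const, integral_div,
      hmom1]
    simp
    field_simp
    ring
  set m : ℝ := ∫ s, 1/s ∂ν with hm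
  have hmge : 1/t ≤ m := by linarith [hmono, hcomp.symm.le]
  have hmpos : 0 < m := lt_of_lt_of_le (by positivity) hmge
  have hξe2 : ξe ^ 2 = m⁻¹ := by
    rw [hξe, Real.sq_sqrt (inv_nonneg.2 hmpos.le)]
  have hξepos : 0 < ξe := by rw [hξe]; exact Real.sqrt_pos.2 (inv_pos.2 hmpos)
  have hξele : ξe ≤ ξ 1 := by
    have h1 : ξe ^ 2 ≤ t := by
      rw [hξe2, inv_le_comm₀ hmpos ht0]
      rwa [one_div] at hmge
    nlinarith
  have hξelt1 : ξe < 1 := lt_of_le_of_lt hξele hξ1lt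
  have hξesq1 : ξe ^ 2 ≤ 1 := by nlinarith
  have hb2 : b ^ 2 ≤ ξe ^ 2 := by
    nlinarith [mul_le_mul hb hb hb₀.le (sq_nonneg ξe),
      mul_le_mul_of_nonneg_left hξesq1 (sq_nonneg ξe)]
  have ha2 : a ^ 2 ≤ ξe ^ 2 := by nlinarith
  exact ⟨hξepos, hξele, hξelt1, hb2, ha2⟩

/-- The 2×2 matrix of the Six-point Test at base point `k` for a 2-variable
weighted shift with weight families `α`, `β`. -/
def sixPointMatrix (α β : ℕ × ℕ → ℝ) (k : ℕ × ℕ) : Matrix (Fin 2) (Fin 2) ℝ :=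
  !![α (k.1 + 1, k.2) ^ 2 - α k ^ 2,
     α (k.1, k.2 + 1) * β (k.1 + 1, k.2) - α k * β k;
     α (k.1, k.2 + 1) * β (k.1 + 1, k.2) - α k * β k,
     β (k.1, k.2 + 1) ^ 2 - β k ^ 2]

set_option maxHeartbeats 2000000 in
/-- The third family of 2-variable weighted shifts (Figure 5) is jointly
hyponormal under conditions (i)–(vii). -/
theorem stmt15 (ξ : ℕ → ℝ) (ν : Measure ℝ) (hνprob : IsProbabilityMeasure ν)
    (hνsupp : ν (Set.Ioc (0 : ℝ) 1)ᶜ = 0)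
    (hξpos : ∀ n : ℕ, 1 ≤ n → 0 < ξ n) (hξlt1 : ∀ n : ℕ, 1 ≤ n → ξ n < 1)
    (hξmono : ∀ n : ℕ, 1 ≤ n → ξ n < ξ (n + 1))
    (hmom : ∀ n : ℕ, 1 ≤ n → ∫ s, s ^ n ∂ν = ∏ i ∈ Finset.Icc 1 n, ξ i ^ 2)
    (hint : Integrable (fun s => 1 / s ^ 2) ν)
    (ξe : ℝ) (hξe : ξe = Real.sqrt (∫ s, 1 / s ∂ν)⁻¹)
    (a b : ℝ) (ha₀ : 0 < a) (hb₀ : 0 < b)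
    (ha : a ≤ ξe⁻¹ * Real.sqrt (∫ s, 1 / s ^ 2 ∂ν)⁻¹)
    (hb : b ≤ ξe ^ 2) (hab : 2 * a ^ 2 ≤ b ^ 2 + ξe ^ 2)
    (α β : ℕ × ℕ → ℝ)
    (hα : ∀ i j : ℕ, α (i, j) =
      if j = 0 then (if i = 0 then a else if i = 1 then ξe else ξ (i - 1))
      else if i = 0 then (if j = 1 then b else ξ (j - 1) * b / ξe)
      else ξ i)
    (hβ : ∀ k : ℕ × ℕ, β k = α (k.2, k.1)) :
    ∀ k : ℕ × ℕ, (sixPointMatrix α β k).PosSemidef := by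
  have hξ1 : 0 < ξ 1 := hξpos 1 le_rfl
  have hξ1lt : ξ 1 < 1 := hξlt1 1 le_rfl
  obtain ⟨hξepos, hξele, hξelt1, hb2, ha2⟩ :=
    prelim ξ ν hνprob hνsupp hξpos hξlt1 hmom hint ξe hξe a b ha₀ hb₀ hb hab
  have hle : ∀ n : ℕ, 1 ≤ n → ξ 1 ≤ ξ n := by
    intro n hn
    induction n with
    | zero => omega
    | succ k ih =>
      match k, ih with
      | 0, _ => exact le_rfl
      | (k+1), ih => exact (ih (by omega)).trans (hξmono (k+1) (by omega)).le
  -- case analysis on the base point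
  rintro ⟨i, j⟩
  match i, j with
  | 0, 0 =>
    simp only [sixPointMatrix, hβ, hα]
    norm_num
    refine psd2 _ _ _ (by nlinarith) (by nlinarith) ?_
    nlinarith [mul_nonneg (sub_nonneg.2 hb2) (show (0:ℝ) ≤ b^2 + ξe^2 - 2*a^2 by linarith)]
  | 1, 0 =>
    simp only [sixPointMatrix, hβ, hα]
    norm_num
    refine psd2 _ _ _ (by nlinarith) (by nlinarith) ?_
    exact auxS (ξ 1) ξe b hξ1 hξ1lt.le hξepos hξele hb₀ hb
  | (i+2), 0 =>
    simp only [sixPointMatrix, hβ, hα]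
    norm_num
    simp only [if_neg (show ¬ (i+2 = 1) by omega)]
    have h12 : ξ 1 ≤ ξ (i+1) := hle (i+1) (by omega)
    have h23 : ξ (i+1) ≤ ξ (i+2) := (hξmono (i+1) (by omega)).le
    have h3 : ξ (i+2) ≤ 1 := (hξlt1 (i+2) (by omega)).le
    refine psd2 _ _ _ (by nlinarith) ?_ ?_
    · exact auxR (ξ 1) (ξ (i+1)) ξe b hξ1 h12 (by linarith) hξepos hξele hb₀ hb
    · exact auxQ (ξ 1) (ξ (i+1)) (ξ (i+2)) ξe b hξ1 h12 h23 h3 hξepos hξele hb₀ hb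
  | 0, 1 =>
    simp only [sixPointMatrix, hβ, hα]
    norm_num
    refine psd2 _ _ _ (by nlinarith) (by nlinarith) ?_
    have h := auxS (ξ 1) ξe b hξ1 hξ1lt.le hξepos hξele hb₀ hb
    calc (ξ 1 * b / ξe * ξ 1 - b * ξe) ^ 2
        = (ξ 1 * (ξ 1 * b / ξe) - ξe * b) ^ 2 := by ring
      _ ≤ (ξ 1 ^ 2 - ξe ^ 2) * (ξ 1 ^ 2 - b ^ 2) := h
      _ = (ξ 1 ^ 2 - b ^ 2) * (ξ 1 ^ 2 - ξe ^ 2) := by ring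
  | 0, (j+2) =>
    simp only [sixPointMatrix, hβ, hα]
    norm_num
    simp only [if_neg (show ¬ (j+2 = 1) by omega)]
    have h12 : ξ 1 ≤ ξ (j+1) := hle (j+1) (by omega)
    have h23 : ξ (j+1) ≤ ξ (j+2) := (hξmono (j+1) (by omega)).le
    have h3 : ξ (j+2) ≤ 1 := (hξlt1 (j+2) (by omega)).le
    refine psd2 _ _ _ ?_ (by nlinarith) ?_
    · exact auxR (ξ 1) (ξ (j+1)) ξe b hξ1 h12 (by linarith) hξepos hξele hb₀ hb
    · exact auxQ' (ξ 1) (ξ (j+1)) (ξ (j+2)) ξe b hξ1 h12 h23 h3 hξepos hξele hb₀ hb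
  | (i+1), (j+1) =>
    simp only [sixPointMatrix, hβ, hα]
    norm_num
    have hi : ξ (i+1) ≤ ξ (i+1+1) := (hξmono (i+1) (by omega)).le
    have hj : ξ (j+1) ≤ ξ (j+1+1) := (hξmono (j+1) (by omega)).le
    have hip : 0 < ξ (i+1) := hξpos (i+1) (by omega)
    have hjp : 0 < ξ (j+1) := hξpos (j+1) (by omega)
    refine psd2 _ _ _ (by nlinarith) (by nlinarith) ?_
    nlinarith [mul_nonneg (show (0:ℝ) ≤ ξ (i+1+1) ^ 2 - ξ (i+1) ^ 2 by nlinarith)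
      (show (0:ℝ) ≤ ξ (j+1+1) ^ 2 - ξ (j+1) ^ 2 by nlinarith)]
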